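/- Let α ∈ (1,2) and define the double power series h(x,t) = (1/π)·∑_{k≥1,n≥1} (−1)^{k+n}·[Γ(k/α + n)/(Γ(αn)·k!)]·sin(πk/α)·(1−x)^k·t^{−k/α−n}. Then for every real x and complex t with t ∉ (−∞, 0], the series converges absolutely; moreover for fixed t the function x ↦ h(x,t) is entire and for fixed x the function t ↦ h(x,t) is analytic on ℂ ∖ (−∞, 0]. -/

import Mathlib

open Real Filter Topology

lemma st14_fact_bound (K : ℕ) : (2 * K).factorial ≤ 4 ^ K * (K.factorial * K.factorial) := by
  have h1 : (2 * K).choose K * (K.factorial * K.factorial) = (2 * K).factorial := by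
    have := Nat.choose_mul_factorial_mul_factorial (show K ≤ 2 * K by omega)
    rw [show 2 * K - K = K by omega] at this
    rw [← this]; ring
  have h2 : (2 * K).choose K ≤ 4 ^ K := by
    calc (2 * K).choose K ≤ ∑ m ∈ Finset.range (2 * K + 1), (2 * K).choose m :=
          Finset.single_le_sum (fun i _ => Nat.zero_le _)
            (Finset.mem_range.mpr (by omega))
      _ = 2 ^ (2 * K) := Nat.sum_range_choose (2 * K)
      _ = 4 ^ K := by rw [pow_mul]; norm_num
  calc (2 * K).factorial = (2 * K).choose K * (K.factorial * K.factorial) := h1.symm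
    _ ≤ 4 ^ K * (K.factorial * K.factorial) := Nat.mul_le_mul_right _ h2

lemma st14_shift_le {x s : ℝ} (hx : 0 < x) (hs0 : 0 < s) (hs1 : s < 1) :
    Real.Gamma (x + s) ≤ Real.Gamma x * x ^ s := by
  have h := Real.Gamma_mul_add_mul_le_rpow_Gamma_mul_rpow_Gamma hx
    (by linarith : (0:ℝ) < x + 1) (by linarith : (0:ℝ) < 1 - s) hs0 (by ring)
  rw [show (1 - s) * x + s * (x + 1) = x + s by ring,
    Real.Gamma_add_one hx.ne'] at h
  have hG := Real.Gamma_pos_of_pos hx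
  calc Real.Gamma (x + s) ≤ Real.Gamma x ^ (1 - s) * (x * Real.Gamma x) ^ s := h
    _ = Real.Gamma x * x ^ s := by
        rw [Real.mul_rpow hx.le hG.le, ← mul_assoc,
          mul_comm (Real.Gamma x ^ (1 - s)) (x ^ s), mul_assoc,
          ← Real.rpow_add hG, sub_add_cancel, Real.rpow_one, mul_comm]

lemma st14_shift_ge {x s : ℝ} (hx : 0 < x) (hs0 : 0 < s) (hs1 : s < 1) :
    x * Real.Gamma x ≤ Real.Gamma (x + s) * (x + s) ^ (1 - s) := by
  have h := st14_shift_le (x := x + s) (s := 1 - s) (by linarith) (by linarith) (by linarith)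
  rw [show x + s + (1 - s) = x + 1 by ring, Real.Gamma_add_one hx.ne'] at h
  exact h

-- split lemma
lemma st14_split {α K N : ℝ} (hK : 0 < K) (hN : 0 < N) (hα : 0 < α) :
    Real.Gamma (K / α + N) ≤
      Real.Gamma (2 * K / α) ^ ((2:ℝ)⁻¹) * Real.Gamma (2 * N) ^ ((2:ℝ)⁻¹) := by
  have h := Real.Gamma_mul_add_mul_le_rpow_Gamma_mul_rpow_Gamma
    (s := 2 * K / α) (t := 2 * N) (a := (2:ℝ)⁻¹) (b := (2:ℝ)⁻¹)
    (by positivity) (by positivity) (by norm_num) (by norm_num) (by norm_num)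
  rw [show (2:ℝ)⁻¹ * (2 * K / α) + (2:ℝ)⁻¹ * (2 * N) = K / α + N by ring] at h
  exact h

lemma st14_gA {α : ℝ} (h1 : 1 < α) (h2 : α < 2) (K : ℕ) (hK : 1 ≤ K) :
    Real.Gamma (2 * K / α) ≤ ((2 * K).factorial : ℝ) ^ (α⁻¹) := by
  have hα : (0:ℝ) < α := by linarith
  have hK1 : (1:ℝ) ≤ (K:ℝ) := by exact_mod_cast hK
  have hy0 : 0 < 2 * (K:ℝ) / α := by positivity
  have hy : 1 ≤ 2 * (K:ℝ) / α := by rw [le_div_iff₀ hα]; nlinarith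
  have step1 : Real.Gamma (2 * K / α) ≤ Real.Gamma (2 * K / α + 1) := by
    rw [Real.Gamma_add_one hy0.ne']
    nlinarith [Real.Gamma_pos_of_pos hy0]
  have ha : (0:ℝ) < 1 - α⁻¹ := by
    have : α⁻¹ < 1 := by rw [inv_lt_one_iff₀]; right; exact h1
    linarith
  have step2 : Real.Gamma (2 * (K:ℝ) / α + 1) ≤
      Real.Gamma 1 ^ (1 - α⁻¹) * Real.Gamma (2 * (K:ℝ) + 1) ^ (α⁻¹) := by
    have h := Real.Gamma_mul_add_mul_le_rpow_Gamma_mul_rpow_Gamma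
      (s := 1) (t := 2 * (K:ℝ) + 1) (a := 1 - α⁻¹) (b := α⁻¹) one_pos (by positivity)
      ha (by positivity) (by ring)
    rw [show (1 - α⁻¹) * 1 + α⁻¹ * (2 * (K:ℝ) + 1) = 2 * K / α + 1 by
      field_simp; ring] at h
    exact h
  have hfact : Real.Gamma (2 * (K:ℝ) + 1) = ((2 * K).factorial : ℝ) := by
    have := Real.Gamma_nat_eq_factorial (2 * K)
    rw [← this]; push_cast; ring_nf
  rw [Real.Gamma_one, Real.one_rpow, one_mul, hfact] at step2
  exact step1.trans step2

lemma st14_gA' {α : ℝ} (h1 : 1 < α) (h2 : α < 2) (K : ℕ) (hK : 1 ≤ K) :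
    Real.Gamma (2 * K / α) ^ ((2:ℝ)⁻¹) ≤
      ((4:ℝ) ^ ((2*α)⁻¹ : ℝ)) ^ K * ((K.factorial : ℝ)) ^ (α⁻¹) := by
  have hα : (0:ℝ) < α := by linarith
  have hy0 : 0 < 2 * (K:ℝ) / α := by positivity
  have hG := Real.Gamma_pos_of_pos hy0
  calc Real.Gamma (2 * K / α) ^ ((2:ℝ)⁻¹)
      ≤ (((2 * K).factorial : ℝ) ^ (α⁻¹)) ^ ((2:ℝ)⁻¹) := by
        apply Real.rpow_le_rpow hG.le (st14_gA h1 h2 K hK) (by norm_num)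
    _ = ((2 * K).factorial : ℝ) ^ ((2*α)⁻¹ : ℝ) := by
        rw [← Real.rpow_mul (by positivity)]
        congr 1; rw [mul_inv]; ring
    _ ≤ ((4 ^ K * (K.factorial * K.factorial) : ℕ) : ℝ) ^ ((2*α)⁻¹ : ℝ) := by
        apply Real.rpow_le_rpow (by positivity) (by exact_mod_cast st14_fact_bound K)
          (by positivity)
    _ = ((4:ℝ) ^ ((2*α)⁻¹ : ℝ)) ^ K * ((K.factorial : ℝ)) ^ (α⁻¹) := by
        push_cast
        rw [Real.mul_rpow (by positivity) (by positivity)]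
        congr 1
        · rw [← Real.rpow_natCast ((4:ℝ) ^ ((2*α)⁻¹ : ℝ)) K,
            ← Real.rpow_mul (by norm_num : (0:ℝ) ≤ 4),
            ← Real.rpow_natCast (4:ℝ) K, ← Real.rpow_mul (by norm_num : (0:ℝ) ≤ 4)]
          congr 1; ring
        · rw [show ((K.factorial : ℝ) * (K.factorial : ℝ)) = (K.factorial : ℝ) ^ (2:ℕ) by ring,
            ← Real.rpow_natCast ((K.factorial : ℝ)) 2, ← Real.rpow_mul (by positivity)]
          congr 1; push_cast; field_simp

lemma st14_gB {α : ℝ} (h1 : 1 < α) (h2 : α < 2) (N : ℕ) (hN : 1 ≤ N) :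
    Real.Gamma (2 * (N:ℝ)) ^ ((2:ℝ)⁻¹) ≤ 2 ^ N * ((N.factorial : ℝ)) := by
  have hfact : Real.Gamma (2 * (N:ℝ)) = ((2 * N - 1).factorial : ℝ) := by
    have := Real.Gamma_nat_eq_factorial (2 * N - 1)
    rw [← this]; congr 1
    rw [Nat.cast_sub (by omega : 1 ≤ 2 * N)]; push_cast; ring
  have hle : ((2 * N - 1).factorial : ℝ) ≤ ((2 * N).factorial : ℝ) := by
    exact_mod_cast Nat.factorial_le (by omega)
  have hle2 : ((2 * N).factorial : ℝ) ≤ (2 ^ N * (N.factorial : ℝ)) ^ (2:ℕ) := by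
    have := st14_fact_bound N
    have : ((2*N).factorial : ℝ) ≤ 4 ^ N * ((N.factorial:ℝ) * (N.factorial:ℝ)) := by
      exact_mod_cast this
    calc ((2*N).factorial : ℝ) ≤ 4 ^ N * ((N.factorial:ℝ) * (N.factorial:ℝ)) := this
      _ = (2 ^ N * (N.factorial : ℝ)) ^ (2:ℕ) := by
          rw [show (4:ℝ) = 2^2 by norm_num, ← pow_mul]; ring
  calc Real.Gamma (2 * (N:ℝ)) ^ ((2:ℝ)⁻¹)
      ≤ ((2 ^ N * (N.factorial : ℝ)) ^ (2:ℕ)) ^ ((2:ℝ)⁻¹) := by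
        apply Real.rpow_le_rpow (by rw [hfact]; positivity) _ (by norm_num)
        rw [hfact]; exact hle.trans hle2
    _ = 2 ^ N * ((N.factorial : ℝ)) := by
        rw [← Real.rpow_natCast (2 ^ N * (N.factorial : ℝ)) 2,
          ← Real.rpow_mul (by positivity)]
        norm_num

lemma st14_sumA {α : ℝ} (h1 : 1 < α) (c : ℝ) (hc : 0 < c) :
    Summable (fun k : ℕ => ((k+1).factorial : ℝ) ^ (α⁻¹ - 1) * c ^ (k+1)) := by
  set a : ℕ → ℝ := fun k => ((k+1).factorial : ℝ) ^ (α⁻¹ - 1) * c ^ (k+1) with ha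
  have hapos : ∀ k, 0 < a k := fun k => by
    apply mul_pos (Real.rpow_pos_of_pos (by positivity) _) (by positivity)
  apply summable_of_ratio_test_tendsto_lt_one (l := 0) one_pos
    (Eventually.of_forall fun n => (hapos n).ne')
  have heq : ∀ n : ℕ, ‖a (n+1)‖ / ‖a n‖ = ((n:ℝ)+2) ^ (α⁻¹ - 1) * c := by
    intro n
    rw [Real.norm_of_nonneg (hapos _).le, Real.norm_of_nonneg (hapos _).le]
    have hfs : (((n+1+1).factorial : ℕ) : ℝ) = ((n:ℝ)+2) * ((n+1).factorial : ℝ) := by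
      rw [Nat.factorial_succ]; push_cast; ring
    rw [ha]
    simp only
    rw [hfs, Real.mul_rpow (by positivity) (by positivity), pow_succ c (n+1)]
    have h1 : (((n+1).factorial : ℝ) : ℝ) ^ (α⁻¹ - 1) ≠ 0 :=
      (Real.rpow_pos_of_pos (by positivity) _).ne'
    field_simp
  simp only [heq]
  have h0 : Tendsto (fun x : ℝ => x ^ (α⁻¹ - 1)) atTop (𝓝 0) := by
    have : α⁻¹ - 1 = -(1 - α⁻¹) := by ring
    rw [this]
    apply tendsto_rpow_neg_atTop
    have : α⁻¹ < 1 := by rw [inv_lt_one_iff₀]; right; exact h1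
    linarith
  have h2 : Tendsto (fun n : ℕ => (n:ℝ) + 2) atTop atTop :=
    tendsto_atTop_add_const_right _ 2 tendsto_natCast_atTop_atTop
  have := (h0.comp h2).mul_const c
  simpa using this

lemma st14_sumB {α : ℝ} (h1 : 1 < α) (h2 : α < 2) (d : ℝ) (hd : 0 < d) :
    Summable (fun n : ℕ => ((n+1).factorial : ℝ) * d ^ (n+1) / Real.Gamma (α * (n+1))) := by
  set b : ℕ → ℝ := fun n => ((n+1).factorial : ℝ) * d ^ (n+1) / Real.Gamma (α * (n+1)) with hb
  have hΓpos : ∀ n : ℕ, 0 < Real.Gamma (α * (n+1)) := fun n =>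
    Real.Gamma_pos_of_pos (by positivity)
  have hbpos : ∀ n, 0 < b n := fun n => by
    apply div_pos (by positivity) (hΓpos n)
  apply summable_of_ratio_norm_eventually_le (r := 1/2) (by norm_num)
  have hev : ∀ᶠ n : ℕ in atTop, 4 * d ≤ ((n:ℝ)+1) ^ (α-1) := by
    have ht : Tendsto (fun n : ℕ => ((n:ℝ)+1) ^ (α-1)) atTop atTop := by
      apply (tendsto_rpow_atTop (by linarith : (0:ℝ) < α - 1)).comp
      exact tendsto_atTop_add_const_right _ 1 tendsto_natCast_atTop_atTop
    exact ht.eventually_ge_atTop _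
  filter_upwards [hev] with n hn
  rw [Real.norm_of_nonneg (hbpos _).le, Real.norm_of_nonneg (hbpos _).le]
  set N : ℝ := (n:ℝ) + 1 with hN
  have hN1 : 1 ≤ N := by simp [hN]
  have hz : (0:ℝ) < α * N := by nlinarith
  have hz1 : (0:ℝ) < α * N + α - 1 := by nlinarith
  -- lower bound for Gamma (α*N + α)
  have key : α * N * (α * N + α - 1) ^ (α - 1) * Real.Gamma (α * N) ≤
      Real.Gamma (α * N + α) := by
    have hs := st14_shift_ge (x := α * N) (s := α - 1) hz (by linarith) (by linarith)
    -- α*N * Γ(α*N) ≤ Γ(α*N + (α-1)) * (α*N + (α-1)) ^ (1-(α-1))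
    have hadd : Real.Gamma (α * N + α) = (α * N + α - 1) * Real.Gamma (α * N + α - 1) := by
      have := Real.Gamma_add_one (s := α * N + α - 1) hz1.ne'
      rw [show α * N + α - 1 + 1 = α * N + α by ring] at this
      exact this
    have e1 : α * N + (α - 1) = α * N + α - 1 := by ring
    rw [e1] at hs
    -- hs : α*N*Γ(α*N) ≤ Γ(α*N+α-1) * (α*N+α-1)^(2-α)
    have e2 : (1 : ℝ) - (α - 1) = 2 - α := by ring
    rw [e2] at hs
    have hpow : (α * N + α - 1) ^ (α - 1) * (α * N + α - 1) ^ (2 - α) = α * N + α - 1 := by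
      rw [← Real.rpow_add hz1]
      norm_num
    calc α * N * (α * N + α - 1) ^ (α - 1) * Real.Gamma (α * N)
        = (α * N * Real.Gamma (α * N)) * (α * N + α - 1) ^ (α - 1) := by ring
      _ ≤ (Real.Gamma (α * N + α - 1) * (α * N + α - 1) ^ (2 - α)) *
            (α * N + α - 1) ^ (α - 1) := by
          apply mul_le_mul_of_nonneg_right hs (Real.rpow_nonneg hz1.le _)
      _ = Real.Gamma (α * N + α - 1) * ((α * N + α - 1) ^ (α-1) * (α * N + α - 1) ^ (2-α)) := by
          ring
      _ = Real.Gamma (α * N + α) := by rw [hpow, hadd]; ring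
  -- now the main estimate
  have hb1 : b (n+1) = (N + 1) * ((n+1).factorial : ℝ) * (d ^ (n+1) * d) /
      Real.Gamma (α * N + α) := by
    simp only [hb, hN]
    rw [Nat.factorial_succ]
    push_cast
    rw [show α * ((n:ℝ)+1+1) = α * ((n:ℝ)+1) + α by ring, pow_succ]
    try ring
  have hb0 : b n = ((n+1).factorial : ℝ) * d ^ (n+1) / Real.Gamma (α * N) := by
    simp only [hb, hN]
  rw [hb1, hb0]
  rw [div_le_iff₀ (by positivity : (0:ℝ) < Real.Gamma (α * N + α))]
  have hge : 4 * d ≤ (α * N + α - 1) ^ (α - 1) := by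
    apply hn.trans
    apply Real.rpow_le_rpow (by positivity) (by nlinarith) (by linarith)
  have hGN := hΓpos n
  rw [show Real.Gamma (α * ((n:ℝ)+1)) = Real.Gamma (α * N) from by rw [hN]] at hGN
  -- goal: (N+1) * fact * (d^(n+1) * d) ≤ 1/2 * (fact * d^(n+1) / Γ(αN)) * Γ(αN+α)
  have hfa : (0:ℝ) < ((n+1).factorial : ℝ) := by positivity
  have hdp : (0:ℝ) < d ^ (n+1) := by positivity
  have hkey2 : 2 * ((N + 1) * d) * Real.Gamma (α * N) ≤ Real.Gamma (α * N + α) := by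
    calc 2 * ((N + 1) * d) * Real.Gamma (α * N) ≤ α * N * (4 * d) * Real.Gamma (α * N) := by
          have h2d : 2 * (N + 1) ≤ α * N * 4 := by nlinarith
          have : 2 * ((N + 1) * d) ≤ α * N * (4 * d) := by
            nlinarith [mul_le_mul_of_nonneg_right h2d hd.le]
          exact mul_le_mul_of_nonneg_right this hGN.le
      _ ≤ α * N * (α * N + α - 1) ^ (α - 1) * Real.Gamma (α * N) := by
          apply mul_le_mul_of_nonneg_right _ hGN.le
          have := mul_le_mul_of_nonneg_left hge (by positivity : (0:ℝ) ≤ α * N)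
          linarith [this]
      _ ≤ Real.Gamma (α * N + α) := key
  calc (N + 1) * ((n+1).factorial : ℝ) * (d ^ (n+1) * d)
      = (((n+1).factorial : ℝ) * d ^ (n+1) / Real.Gamma (α * N)) *
        (2 * ((N+1) * d) * Real.Gamma (α * N)) / 2 := by
        field_simp
    _ ≤ (((n+1).factorial : ℝ) * d ^ (n+1) / Real.Gamma (α * N)) *
        Real.Gamma (α * N + α) / 2 := by
        apply div_le_div_of_nonneg_right _ (by norm_num)
        apply mul_le_mul_of_nonneg_left hkey2 (by positivity)
    _ = 1/2 * (((n+1).factorial : ℝ) * d ^ (n+1) / Real.Gamma (α * N)) *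
        Real.Gamma (α * N + α) := by ring


section
variable {α : ℝ}

lemma st14_key (h1 : 1 < α) (h2 : α < 2) (R r : ℝ) (hR : 0 < R) (hr : 0 < r) :
    ∃ u : ℕ × ℕ → ℝ, Summable u ∧
      ∀ (x t : ℂ) (p : ℕ × ℕ), ‖1 - x‖ ≤ R → r ≤ ‖t‖ → t ≠ 0 →
        ‖(-1 : ℂ) ^ ((p.1 + 1) + (p.2 + 1)) *
          ((Real.Gamma (((p.1 : ℝ) + 1)/α + ((p.2 : ℝ) + 1)) /
              (Real.Gamma (α * ((p.2 : ℝ) + 1)) * Nat.factorial (p.1 + 1)) : ℝ) : ℂ) *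
          ((Real.sin (Real.pi * ((p.1 : ℝ) + 1) / α) : ℝ) : ℂ) *
          (1 - x) ^ (p.1 + 1) *
          t ^ (((-(((p.1 : ℝ) + 1)/α) - ((p.2 : ℝ) + 1) : ℝ)) : ℂ)‖ ≤ u p := by
  have hα : (0:ℝ) < α := by linarith
  set q : ℝ := (4:ℝ) ^ ((2*α)⁻¹ : ℝ) with hq
  have hqpos : 0 < q := Real.rpow_pos_of_pos (by norm_num) _
  set c : ℝ := q * R * r ^ (-α⁻¹ : ℝ) with hc
  have hcpos : 0 < c := by
    apply mul_pos (mul_pos hqpos hR) (Real.rpow_pos_of_pos hr _)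
  set d : ℝ := 2 / r with hd
  have hdpos : 0 < d := by positivity
  refine ⟨fun p => (((p.1+1).factorial : ℝ) ^ (α⁻¹ - 1) * c ^ (p.1+1)) *
      (((p.2+1).factorial : ℝ) * d ^ (p.2+1) / Real.Gamma (α * ((p.2:ℝ)+1))), ?_, ?_⟩
  · apply Summable.mul_of_nonneg (st14_sumA h1 c hcpos) (st14_sumB h1 h2 d hdpos)
    · intro k
      positivity
    · intro n
      have := Real.Gamma_pos_of_pos (show (0:ℝ) < α * ((n:ℝ)+1) by positivity)
      positivity
  · rintro x t ⟨k, n⟩ hx ht ht0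
    simp only
    set Kr : ℝ := (k:ℝ) + 1 with hKr
    set Nr : ℝ := (n:ℝ) + 1 with hNr
    have hKr1 : (1:ℝ) ≤ Kr := by simp [hKr]
    have hNr1 : (1:ℝ) ≤ Nr := by simp [hNr]
    have hΓN : 0 < Real.Gamma (α * Nr) := Real.Gamma_pos_of_pos (by positivity)
    have hfK : (0:ℝ) < ((k+1).factorial : ℝ) := by positivity
    have hfN : (0:ℝ) < ((n+1).factorial : ℝ) := by positivity
    -- compute the norm
    have hw : ((-(Kr/α) - Nr : ℝ) : ℂ) = (((-(Kr/α) - Nr : ℝ)) : ℂ) := rfl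
    rw [norm_mul, norm_mul, norm_mul, norm_mul]
    have e1 : ‖(-1 : ℂ) ^ ((k + 1) + (n + 1))‖ = 1 := by
      rw [norm_pow, norm_neg, norm_one, one_pow]
    have e2 : ‖((Real.Gamma (Kr/α + Nr) /
        (Real.Gamma (α * Nr) * Nat.factorial (k + 1)) : ℝ) : ℂ)‖ =
        Real.Gamma (Kr/α + Nr) / (Real.Gamma (α * Nr) * ((k+1).factorial : ℝ)) := by
      rw [Complex.norm_real, Real.norm_of_nonneg]
      have := Real.Gamma_pos_of_pos (show (0:ℝ) < Kr/α + Nr by positivity)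
      positivity
    have e3 : ‖((Real.sin (Real.pi * Kr / α) : ℝ) : ℂ)‖ ≤ 1 := by
      rw [Complex.norm_real, Real.norm_eq_abs]
      exact Real.abs_sin_le_one _
    have e4 : ‖(1 - x) ^ (k + 1)‖ ≤ R ^ (k+1) := by
      rw [norm_pow]
      exact pow_le_pow_left₀ (norm_nonneg _) hx _
    have e5 : ‖t ^ (((-(Kr/α) - Nr : ℝ)) : ℂ)‖ ≤ r ^ (-(Kr/α) - Nr : ℝ) := by
      rw [Complex.norm_cpow_of_ne_zero ht0]
      simp only [Complex.ofReal_re, Complex.ofReal_im, mul_zero, Real.exp_zero, div_one]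
      apply Real.rpow_le_rpow_of_nonpos hr
      · exact ht
      · have : (0:ℝ) < Kr/α + Nr := by positivity
        linarith
    rw [e1, e2, one_mul]
    -- bound the product
    calc Real.Gamma (Kr/α + Nr) / (Real.Gamma (α * Nr) * ((k+1).factorial : ℝ)) *
          ‖((Real.sin (Real.pi * Kr / α) : ℝ) : ℂ)‖ * ‖(1 - x) ^ (k + 1)‖ *
          ‖t ^ (((-(Kr/α) - Nr : ℝ)) : ℂ)‖
        ≤ Real.Gamma (Kr/α + Nr) / (Real.Gamma (α * Nr) * ((k+1).factorial : ℝ)) *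
          1 * R ^ (k+1) * (r ^ (-(Kr/α) - Nr : ℝ)) := by
          have h0 : (0:ℝ) ≤ Real.Gamma (Kr/α + Nr) /
              (Real.Gamma (α * Nr) * ((k+1).factorial : ℝ)) := by
            have := Real.Gamma_pos_of_pos (show (0:ℝ) < Kr/α + Nr by positivity)
            positivity
          have i1 := mul_le_mul_of_nonneg_left e3 h0
          have i2 := mul_le_mul i1 e4 (norm_nonneg _) (by rw [mul_one]; exact h0)
          exact mul_le_mul i2 e5 (norm_nonneg _)
            (by positivity)
      _ ≤ (q ^ (k+1) * ((k+1).factorial : ℝ) ^ (α⁻¹ : ℝ)) * (2 ^ (n+1) * ((n+1).factorial : ℝ)) /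
          (Real.Gamma (α * Nr) * ((k+1).factorial : ℝ)) * R ^ (k+1) *
          (r ^ (-(Kr/α) - Nr : ℝ)) := by
          rw [mul_one]
          apply mul_le_mul_of_nonneg_right _ (Real.rpow_nonneg hr.le _)
          apply mul_le_mul_of_nonneg_right _ (pow_nonneg hR.le _)
          apply div_le_div_of_nonneg_right _ (by positivity)
          calc Real.Gamma (Kr/α + Nr)
              ≤ Real.Gamma (2 * Kr / α) ^ ((2:ℝ)⁻¹) * Real.Gamma (2 * Nr) ^ ((2:ℝ)⁻¹) :=
                st14_split (by linarith) (by linarith) hα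
            _ ≤ (q ^ (k+1) * ((k+1).factorial : ℝ) ^ (α⁻¹ : ℝ)) *
                  (2 ^ (n+1) * ((n+1).factorial : ℝ)) := by
                apply mul_le_mul
                · have := st14_gA' h1 h2 (k+1) (by omega)
                  rw [show ((k+1 : ℕ) : ℝ) = Kr by push_cast [hKr]; ring] at this
                  exact this
                · have := st14_gB h1 h2 (n+1) (by omega)
                  rw [show ((n+1 : ℕ) : ℝ) = Nr by push_cast [hNr]; ring] at this
                  exact this
                · positivity
                · positivity
      _ = (((k+1).factorial : ℝ) ^ (α⁻¹ - 1) * c ^ (k+1)) *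
          (((n+1).factorial : ℝ) * d ^ (n+1) / Real.Gamma (α * Nr)) := by
          rw [hc, hd]
          rw [show (-(Kr/α) - Nr : ℝ) = (-α⁻¹ * Kr) + (-Nr) by field_simp; ring,
            Real.rpow_add hr]
          rw [show ((k+1).factorial : ℝ) ^ (α⁻¹ - 1 : ℝ) =
              ((k+1).factorial : ℝ) ^ (α⁻¹ : ℝ) * (((k+1).factorial : ℝ))⁻¹ by
            rw [show (α⁻¹ - 1 : ℝ) = α⁻¹ + (-1) by ring, Real.rpow_add hfK,
              Real.rpow_neg_one]]
          rw [mul_pow, mul_pow, show ((r ^ (-α⁻¹ : ℝ)) ^ (k+1) : ℝ) = r ^ (-α⁻¹ * Kr : ℝ) by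
            rw [← Real.rpow_natCast (r ^ (-α⁻¹ : ℝ)) (k+1), ← Real.rpow_mul hr.le]
            congr 1
            push_cast [hKr]
            ring]
          have hrN : r ^ (-Nr : ℝ) = ((r : ℝ) ^ (n+1))⁻¹ := by
            rw [Real.rpow_neg hr.le]
            congr 1
            rw [show Nr = ((n+1 : ℕ):ℝ) by push_cast [hNr]; ring, Real.rpow_natCast]
          rw [div_pow, hrN]
          field_simp
end
theorem stmt_14 (α : ℝ) (hα : 1 < α ∧ α < 2)
    (term : ℂ → ℂ → ℕ × ℕ → ℂ)
    (hterm : ∀ x t p, term x t p =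
      (-1 : ℂ) ^ ((p.1 + 1) + (p.2 + 1)) *
        ((Real.Gamma (((p.1 : ℝ) + 1)/α + ((p.2 : ℝ) + 1)) /
            (Real.Gamma (α * ((p.2 : ℝ) + 1)) * Nat.factorial (p.1 + 1)) : ℝ) : ℂ) *
        ((Real.sin (Real.pi * ((p.1 : ℝ) + 1) / α) : ℝ) : ℂ) *
        (1 - x) ^ (p.1 + 1) *
        t ^ (((-(((p.1 : ℝ) + 1)/α) - ((p.2 : ℝ) + 1) : ℝ)) : ℂ)) :
    (∀ x t : ℂ, ¬(t.im = 0 ∧ t.re ≤ 0) →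
      Summable (fun p : ℕ × ℕ => ‖term x t p‖)) ∧
    (∀ t : ℂ, ¬(t.im = 0 ∧ t.re ≤ 0) →
      Differentiable ℂ (fun x : ℂ => (1/(Real.pi : ℂ)) * ∑' p : ℕ × ℕ, term x t p)) ∧
    (∀ x : ℂ, DifferentiableOn ℂ
      (fun t : ℂ => (1/(Real.pi : ℂ)) * ∑' p : ℕ × ℕ, term x t p)
      {t : ℂ | ¬(t.im = 0 ∧ t.re ≤ 0)}) := by
  obtain ⟨h1, h2⟩ := hα
  have hseq : {t : ℂ | ¬(t.im = 0 ∧ t.re ≤ 0)} = Complex.slitPlane := by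
    ext z
    simp only [Set.mem_setOf_eq, Complex.mem_slitPlane_iff, not_and_or, not_le]
    tauto
  have hsopen : IsOpen {t : ℂ | ¬(t.im = 0 ∧ t.re ≤ 0)} := by
    rw [hseq]; exact Complex.isOpen_slitPlane
  refine ⟨?_, ?_, ?_⟩
  · -- summability
    intro x t ht
    have ht0 : t ≠ 0 := by rintro rfl; exact ht ⟨rfl, le_rfl⟩
    have hr : 0 < ‖t‖ := norm_pos_iff.mpr ht0
    obtain ⟨u, hu, hb⟩ := st14_key h1 h2 (‖1 - x‖ + 1) ‖t‖ (by positivity) hr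
    apply Summable.of_nonneg_of_le (fun p => norm_nonneg _) (fun p => ?_) hu
    rw [hterm x t p]
    exact hb x t p (by linarith [norm_nonneg (1 - x)]) le_rfl ht0
  · -- differentiable in x
    intro t ht
    have ht0 : t ≠ 0 := by rintro rfl; exact ht ⟨rfl, le_rfl⟩
    have hr : 0 < ‖t‖ := norm_pos_iff.mpr ht0
    have hdiff : Differentiable ℂ (fun x : ℂ => ∑' p : ℕ × ℕ, term x t p) := by
      intro x₀
      obtain ⟨u, hu, hb⟩ := st14_key h1 h2 (‖1 - x₀‖ + 1) ‖t‖ (by positivity) hr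
      have hU : DifferentiableOn ℂ (fun w : ℂ => ∑' p : ℕ × ℕ, term w t p)
          (Metric.ball x₀ 1) := by
        apply Complex.differentiableOn_tsum_of_summable_norm hu ?_ Metric.isOpen_ball ?_
        · intro p
          have he : (fun w : ℂ => term w t p) = fun w : ℂ =>
              (-1 : ℂ) ^ ((p.1 + 1) + (p.2 + 1)) *
              ((Real.Gamma (((p.1 : ℝ) + 1)/α + ((p.2 : ℝ) + 1)) /
                  (Real.Gamma (α * ((p.2 : ℝ) + 1)) * Nat.factorial (p.1 + 1)) : ℝ) : ℂ) *
              ((Real.sin (Real.pi * ((p.1 : ℝ) + 1) / α) : ℝ) : ℂ) *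
              (1 - w) ^ (p.1 + 1) *
              t ^ (((-(((p.1 : ℝ) + 1)/α) - ((p.2 : ℝ) + 1) : ℝ)) : ℂ) :=
            funext fun w => hterm w t p
          rw [he]
          apply Differentiable.differentiableOn
          exact ((((differentiable_const _).mul (differentiable_const _)).mul
            (differentiable_const _)).mul
            (((differentiable_const _).sub differentiable_id).pow _)).mul
            (differentiable_const _)
        · intro p w hw
          rw [hterm w t p]
          apply hb w t p ?_ le_rfl ht0
          have h1w : ‖1 - w‖ ≤ ‖1 - x₀‖ + ‖x₀ - w‖ := by
            calc ‖1 - w‖ = ‖(1 - x₀) + (x₀ - w)‖ := by ring_nf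
              _ ≤ ‖1 - x₀‖ + ‖x₀ - w‖ := norm_add_le _ _
          have h2w : ‖x₀ - w‖ ≤ 1 := by
            rw [Metric.mem_ball] at hw
            rw [← dist_eq_norm, dist_comm]
            exact hw.le
          linarith
      exact hU.differentiableAt (Metric.isOpen_ball.mem_nhds (Metric.mem_ball_self one_pos))
    exact hdiff.const_mul _
  · -- differentiable in t
    intro x t₀ ht₀
    have ht0 : t₀ ≠ 0 := by
      intro h; apply ht₀; rw [h]; exact ⟨rfl, le_rfl⟩
    have hr : 0 < ‖t₀‖ / 2 := by
      have := norm_pos_iff.mpr ht0; linarith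
    obtain ⟨u, hu, hb⟩ := st14_key h1 h2 (‖1 - x‖ + 1) (‖t₀‖ / 2) (by positivity) hr
    set U : Set ℂ := {t : ℂ | ¬(t.im = 0 ∧ t.re ≤ 0)} ∩ Metric.ball t₀ (‖t₀‖ / 2) with hUdef
    have hUopen : IsOpen U := hsopen.inter Metric.isOpen_ball
    have hwprop : ∀ w ∈ U, ‖t₀‖ / 2 ≤ ‖w‖ ∧ w ≠ 0 := by
      intro w hw
      obtain ⟨hw1, hw2⟩ := hw
      rw [Metric.mem_ball, dist_eq_norm] at hw2
      have := norm_sub_norm_le t₀ w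
      rw [norm_sub_rev] at hw2
      constructor
      · linarith [norm_sub_norm_le t₀ w, (norm_sub_rev t₀ w ▸ hw2)]
      · rintro rfl; exact hw1 ⟨rfl, le_rfl⟩
    have hDU : DifferentiableOn ℂ (fun w : ℂ => ∑' p : ℕ × ℕ, term x w p) U := by
      apply Complex.differentiableOn_tsum_of_summable_norm hu ?_ hUopen ?_
      · intro p
        have he : (fun w : ℂ => term x w p) = fun w : ℂ =>
            (-1 : ℂ) ^ ((p.1 + 1) + (p.2 + 1)) *
            ((Real.Gamma (((p.1 : ℝ) + 1)/α + ((p.2 : ℝ) + 1)) /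
                (Real.Gamma (α * ((p.2 : ℝ) + 1)) * Nat.factorial (p.1 + 1)) : ℝ) : ℂ) *
            ((Real.sin (Real.pi * ((p.1 : ℝ) + 1) / α) : ℝ) : ℂ) *
            (1 - x) ^ (p.1 + 1) *
            w ^ (((-(((p.1 : ℝ) + 1)/α) - ((p.2 : ℝ) + 1) : ℝ)) : ℂ) :=
          funext fun w => hterm x w p
        rw [he]
        intro w hw
        apply DifferentiableAt.differentiableWithinAt
        have hslit : w ∈ Complex.slitPlane := by rw [← hseq]; exact hw.1
        exact (differentiableAt_const _).mul
          (differentiableAt_id.cpow (differentiableAt_const _) hslit)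
      · intro p w hw
        rw [hterm x w p]
        exact hb x w p (by linarith [norm_nonneg (1 - x)]) (hwprop w hw).1 (hwprop w hw).2
    have hmem : t₀ ∈ U := ⟨ht₀, Metric.mem_ball_self hr⟩
    have := hDU.differentiableAt (hUopen.mem_nhds hmem)
    exact (this.const_mul _).differentiableWithinAt
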